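/- arXiv:2411.13735 — 3 statements merged into one kernel-verified Lean document; each statement's English description precedes it below -/
import Mathlib

section
/- Let L be a length function on G. For every finitely supported a : G → ℂ and every finitely supported ξ : G → ℂ, the function g ↦ L(g)·(a*ξ)(g) − (a*(L·ξ))(g) belongs to ℓ^p(G) and satisfies ‖L·(a*ξ) − a*(L·ξ)‖_p^p ≤ ‖a‖₁^p · (Σ_{g ∈ supp(a)} L(g)^p) · ‖ξ‖_p^p, where (L·η)(g) = L(g)η(g) and supp(a) = {g ∈ G : a(g) ≠ 0}. In particular the commutator of the Dirac operator D_L (pointwise multiplication by L) with λ_p(a) extends to a bounded operator on ℓ^p(G). -/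
noncomputable section
open scoped ENNReal Topology
open Function Filter

/-- Convolution: `(a * ξ)(g) = ∑_{k ∈ G} a(k) ξ(k⁻¹ g)`.  For `a ∈ ℓ¹(G)` this is the
left regular representation `λ_p(a)` applied to `ξ`. -/
def conv {G : Type*} [Group G] (a ξ : G → ℂ) : G → ℂ :=
  fun g => ∑' k : G, a k * ξ (k⁻¹ * g)

/-- A length function on a group `G`. -/
def IsLengthFunction {G : Type*} [Group G] (L : G → ℝ) : Prop :=
  (∀ g, 0 ≤ L g) ∧ (∀ g, L g = 0 ↔ g = 1) ∧
    (∀ g h, L (g * h) ≤ L g + L h) ∧ (∀ g, L g⁻¹ = L g)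

/-- A proper length function on a group `G`: a length function all of whose sublevel sets
are finite. -/
def IsProperLengthFunction {G : Type*} [Group G] (L : G → ℝ) : Prop :=
  IsLengthFunction L ∧ ∀ R : ℝ, (L ⁻¹' Set.Icc 0 R).Finite

/-- A finitely supported function is in every `ℓ^p`, `0 < p < ∞`. -/
lemma memℓp_of_finite_support {G : Type*} {p : ℝ≥0∞} (hpt : 0 < p.toReal) {f : G → ℂ}
    (hf : (Function.support f).Finite) : Memℓp f p := by
  apply memℓp_gen
  apply summable_of_ne_finset_zero (s := hf.toFinset)
  intro g hg
  simp only [Set.Finite.mem_toFinset, Function.mem_support, not_not] at hg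
  simp [hg, Real.zero_rpow hpt.ne']

set_option maxHeartbeats 1000000 in
theorem stmt3 (p : ℝ≥0∞) [Fact (1 ≤ p)] (hp' : p ≠ ∞)
    {G : Type*} [Group G] [Countable G]
    (L : G → ℝ) (hL : IsLengthFunction L)
    (a : G → ℂ) (ha : (Function.support a).Finite) :
    (∀ ξ : G → ℂ, (Function.support ξ).Finite →
      Memℓp (fun g => (L g : ℂ) * conv a ξ g
        - conv a (fun k => (L k : ℂ) * ξ k) g) p ∧
      (∑' g : G, ‖(L g : ℂ) * conv a ξ g - conv a (fun k => (L k : ℂ) * ξ k) g‖ ^ p.toReal)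
        ≤ (∑' g : G, ‖a g‖) ^ p.toReal * (∑ g ∈ ha.toFinset, L g ^ p.toReal) *
            ∑' g : G, ‖ξ g‖ ^ p.toReal) ∧
    ∃ T : lp (fun _ : G => ℂ) p →L[ℂ] lp (fun _ : G => ℂ) p,
      ∀ (ξ : G → ℂ) (hs : (Function.support ξ).Finite) (hξ : Memℓp ξ p)
        (hF : Memℓp (fun g => (L g : ℂ) * conv a ξ g
          - conv a (fun k => (L k : ℂ) * ξ k) g) p),
        T ⟨ξ, hξ⟩ = ⟨_, hF⟩ := by
  obtain ⟨hL0, -, hLsub, hLinv⟩ := hL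
  have hp1 : (1 : ℝ≥0∞) ≤ p := Fact.out
  have hp0 : p ≠ 0 := by
    intro h; rw [h] at hp1; exact (not_le.2 zero_lt_one) hp1
  have hpt : 0 < p.toReal := ENNReal.toReal_pos hp0 hp'
  set pt := p.toReal with hptdef
  set s := ha.toFinset with hsdef
  have has : ∀ k, k ∉ s → a k = 0 := by
    intro k hk
    simpa [hsdef] using hk
  -- the pointwise bound on the length difference
  have hLk : ∀ (k g : G), ‖(L g : ℂ) - (L (k⁻¹ * g) : ℂ)‖ ≤ L k := by
    intro k g
    rw [← Complex.ofReal_sub, Complex.norm_real, Real.norm_eq_abs, abs_sub_le_iff]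
    constructor
    · have := hLsub k (k⁻¹ * g)
      rw [mul_inv_cancel_left] at this
      linarith
    · have := hLsub k⁻¹ g
      rw [hLinv] at this
      linarith
  -- the individual terms of the commutator
  set t : G → (G → ℂ) → G → ℂ :=
    fun k ξ g => a k * ((L g : ℂ) - (L (k⁻¹ * g) : ℂ)) * ξ (k⁻¹ * g) with htdef
  -- translation invariance of the p-th power sums
  have htransl : ∀ (k : G) (f : G → ℝ), (∑' g : G, f (k⁻¹ * g)) = ∑' g : G, f g := by
    intro k f
    exact Equiv.tsum_eq (Equiv.mulLeft k⁻¹) f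
  have htranslS : ∀ (k : G) (f : G → ℝ), Summable f → Summable (fun g => f (k⁻¹ * g)) := by
    intro k f hf
    exact (Equiv.summable_iff (Equiv.mulLeft k⁻¹)).mpr hf
  -- term estimates
  have hterm : ∀ (k : G) (ξ : G → ℂ), Memℓp ξ p →
      Memℓp (t k ξ) p ∧
      (∑' g : G, ‖t k ξ g‖ ^ pt) ≤ (‖a k‖ * L k) ^ pt * ∑' g : G, ‖ξ g‖ ^ pt := by
    intro k ξ hξ
    have hsum : Summable (fun g : G => ‖ξ (k⁻¹ * g)‖ ^ pt) :=
      htranslS k _ (hξ.summable hpt)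
    have hub : ∀ g : G, ‖t k ξ g‖ ^ pt ≤ (‖a k‖ * L k) ^ pt * ‖ξ (k⁻¹ * g)‖ ^ pt := by
      intro g
      rw [← Real.mul_rpow (mul_nonneg (norm_nonneg _) (hL0 k)) (norm_nonneg _)]
      refine Real.rpow_le_rpow (norm_nonneg _) ?_ hpt.le
      calc ‖t k ξ g‖ = ‖a k‖ * ‖(L g : ℂ) - (L (k⁻¹ * g) : ℂ)‖ * ‖ξ (k⁻¹ * g)‖ := by
            simp [htdef, norm_mul]
        _ ≤ ‖a k‖ * L k * ‖ξ (k⁻¹ * g)‖ := by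
            gcongr
            exact hLk k g
    have hmem : Memℓp (t k ξ) p := by
      apply memℓp_gen
      exact Summable.of_nonneg_of_le (fun g => Real.rpow_nonneg (norm_nonneg _) _) hub
        (hsum.mul_left _)
    refine ⟨hmem, ?_⟩
    calc (∑' g : G, ‖t k ξ g‖ ^ pt)
        ≤ ∑' g : G, (‖a k‖ * L k) ^ pt * ‖ξ (k⁻¹ * g)‖ ^ pt :=
          Summable.tsum_le_tsum hub (hmem.summable hpt) (hsum.mul_left _)
      _ = (‖a k‖ * L k) ^ pt * ∑' g : G, ‖ξ (k⁻¹ * g)‖ ^ pt := tsum_mul_left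
      _ = (‖a k‖ * L k) ^ pt * ∑' g : G, ‖ξ g‖ ^ pt := by
          rw [htransl k (fun g => ‖ξ g‖ ^ pt)]
  -- the commutator equals the finite sum of terms
  have hFsum : ∀ (ξ : G → ℂ) (g : G),
      (L g : ℂ) * conv a ξ g - conv a (fun k => (L k : ℂ) * ξ k) g
        = ∑ k ∈ s, t k ξ g := by
    intro ξ g
    have h1 : conv a ξ g = ∑ k ∈ s, a k * ξ (k⁻¹ * g) := by
      refine tsum_eq_sum ?_
      intro k hk
      simp [has k hk]
    have h2 : conv a (fun k => (L k : ℂ) * ξ k) g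
        = ∑ k ∈ s, a k * ((L (k⁻¹ * g) : ℂ) * ξ (k⁻¹ * g)) := by
      refine tsum_eq_sum ?_
      intro k hk
      simp [has k hk]
    rw [h1, h2, Finset.mul_sum, ← Finset.sum_sub_distrib]
    refine Finset.sum_congr rfl fun k _ => ?_
    simp only [htdef]
    ring
  set C : ℝ := ∑ k ∈ s, ‖a k‖ * L k with hCdef
  have hC0 : 0 ≤ C := Finset.sum_nonneg fun k _ => mul_nonneg (norm_nonneg _) (hL0 k)
  -- the main estimate, for arbitrary ℓ^p functions
  have hmain : ∀ (ξ : G → ℂ) (hξ : Memℓp ξ p),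
      Memℓp (fun g => ∑ k ∈ s, t k ξ g) p ∧
      ∀ (hm : Memℓp (fun g => ∑ k ∈ s, t k ξ g) p),
        ‖(⟨_, hm⟩ : lp (fun _ : G => ℂ) p)‖ ≤ C * ‖(⟨ξ, hξ⟩ : lp (fun _ : G => ℂ) p)‖ := by
    intro ξ hξ
    have hmemk : ∀ k : G, Memℓp (t k ξ) p := fun k => (hterm k ξ hξ).1
    refine ⟨Memℓp.finset_sum s (fun k _ => hmemk k), ?_⟩
    intro hm
    have hdecomp : (⟨_, hm⟩ : lp (fun _ : G => ℂ) p)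
        = ∑ k ∈ s, (⟨t k ξ, hmemk k⟩ : lp (fun _ : G => ℂ) p) := by
      apply lp.ext
      rw [lp.coeFn_sum]
      funext g
      simp [Finset.sum_apply]
    have hnormk : ∀ k : G,
        ‖(⟨t k ξ, hmemk k⟩ : lp (fun _ : G => ℂ) p)‖
          ≤ ‖a k‖ * L k * ‖(⟨ξ, hξ⟩ : lp (fun _ : G => ℂ) p)‖ := by
      intro k
      refine lp.norm_le_of_tsum_le hpt (mul_nonneg (mul_nonneg (norm_nonneg _) (hL0 k)) (norm_nonneg _)) ?_
      have := (hterm k ξ hξ).2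
      calc (∑' g : G, ‖t k ξ g‖ ^ pt)
          ≤ (‖a k‖ * L k) ^ pt * ∑' g : G, ‖ξ g‖ ^ pt := this
        _ = (‖a k‖ * L k) ^ pt * ‖(⟨ξ, hξ⟩ : lp (fun _ : G => ℂ) p)‖ ^ pt := by
            rw [lp.norm_rpow_eq_tsum hpt]
        _ = (‖a k‖ * L k * ‖(⟨ξ, hξ⟩ : lp (fun _ : G => ℂ) p)‖) ^ pt := by
            rw [Real.mul_rpow (mul_nonneg (norm_nonneg _) (hL0 k)) (lp.norm_nonneg' _)]
    calc ‖(⟨_, hm⟩ : lp (fun _ : G => ℂ) p)‖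
        = ‖∑ k ∈ s, (⟨t k ξ, hmemk k⟩ : lp (fun _ : G => ℂ) p)‖ := by rw [hdecomp]
      _ ≤ ∑ k ∈ s, ‖(⟨t k ξ, hmemk k⟩ : lp (fun _ : G => ℂ) p)‖ := norm_sum_le _ _
      _ ≤ ∑ k ∈ s, ‖a k‖ * L k * ‖(⟨ξ, hξ⟩ : lp (fun _ : G => ℂ) p)‖ :=
          Finset.sum_le_sum fun k _ => hnormk k
      _ = C * ‖(⟨ξ, hξ⟩ : lp (fun _ : G => ℂ) p)‖ := by rw [← Finset.sum_mul]
  -- the constant estimate : C ^ pt ≤ (∑' ‖a‖) ^ pt * ∑ L ^ pt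
  have hCbound : C ^ pt ≤ (∑' g : G, ‖a g‖) ^ pt * ∑ g ∈ s, L g ^ pt := by
    have hA : (∑' g : G, ‖a g‖) = ∑ k ∈ s, ‖a k‖ := by
      refine tsum_eq_sum ?_
      intro k hk
      simp [has k hk]
    set M : ℝ := (∑ g ∈ s, L g ^ pt) ^ (1 / pt) with hMdef
    have hS0 : 0 ≤ ∑ g ∈ s, L g ^ pt :=
      Finset.sum_nonneg fun g _ => Real.rpow_nonneg (hL0 g) _
    have hM0 : 0 ≤ M := Real.rpow_nonneg hS0 _
    have hLM : ∀ k ∈ s, L k ≤ M := by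
      intro k hk
      have h1 : L k ^ pt ≤ ∑ g ∈ s, L g ^ pt :=
        Finset.single_le_sum (fun g _ => Real.rpow_nonneg (hL0 g) _) hk
      have h2 : (L k ^ pt) ^ (1 / pt) ≤ M :=
        Real.rpow_le_rpow (Real.rpow_nonneg (hL0 k) _) h1 (by positivity)
      rwa [← Real.rpow_mul (hL0 k), mul_one_div_cancel hpt.ne', Real.rpow_one] at h2
    have hCle : C ≤ (∑ k ∈ s, ‖a k‖) * M := by
      rw [Finset.sum_mul]
      exact Finset.sum_le_sum fun k hk =>
        mul_le_mul_of_nonneg_left (hLM k hk) (norm_nonneg _)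
    have hAnn : 0 ≤ ∑ k ∈ s, ‖a k‖ := Finset.sum_nonneg fun k _ => norm_nonneg _
    calc C ^ pt ≤ ((∑ k ∈ s, ‖a k‖) * M) ^ pt := Real.rpow_le_rpow hC0 hCle hpt.le
      _ = (∑ k ∈ s, ‖a k‖) ^ pt * M ^ pt := Real.mul_rpow hAnn hM0
      _ = (∑' g : G, ‖a g‖) ^ pt * ∑ g ∈ s, L g ^ pt := by
          rw [hA, hMdef, ← Real.rpow_mul hS0, one_div_mul_cancel hpt.ne', Real.rpow_one]
  constructor
  · -- part 1
    intro ξ hξfin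
    have hξ : Memℓp ξ p := memℓp_of_finite_support hpt hξfin
    have hfun : (fun g => (L g : ℂ) * conv a ξ g - conv a (fun k => (L k : ℂ) * ξ k) g)
        = fun g => ∑ k ∈ s, t k ξ g := funext fun g => hFsum ξ g
    obtain ⟨hm, hnorm⟩ := hmain ξ hξ
    rw [hfun]
    refine ⟨hm, ?_⟩
    simp only [hFsum ξ]
    have hle := hnorm hm
    have h1 : (∑' g : G, ‖∑ k ∈ s, t k ξ g‖ ^ pt)
        ≤ C ^ pt * ∑' g : G, ‖ξ g‖ ^ pt := by
      have := Real.rpow_le_rpow (lp.norm_nonneg' _) hle hpt.le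
      rw [Real.mul_rpow hC0 (lp.norm_nonneg' _)] at this
      rw [← lp.norm_rpow_eq_tsum hpt (⟨_, hm⟩ : lp (fun _ : G => ℂ) p)]
      calc ‖(⟨_, hm⟩ : lp (fun _ : G => ℂ) p)‖ ^ pt
          ≤ C ^ pt * ‖(⟨ξ, hξ⟩ : lp (fun _ : G => ℂ) p)‖ ^ pt := this
        _ = C ^ pt * ∑' g : G, ‖ξ g‖ ^ pt := by rw [lp.norm_rpow_eq_tsum hpt]
    refine h1.trans ?_
    have hξnn : 0 ≤ ∑' g : G, ‖ξ g‖ ^ pt :=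
      tsum_nonneg fun g => Real.rpow_nonneg (norm_nonneg _) _
    exact mul_le_mul_of_nonneg_right hCbound hξnn
  · -- part 2 : the bounded operator
    have hTk : ∀ k : G, ∃ Tk : lp (fun _ : G => ℂ) p →L[ℂ] lp (fun _ : G => ℂ) p,
        ∀ η : lp (fun _ : G => ℂ) p, (Tk η : ∀ _ : G, ℂ) = t k η := by
      intro k
      refine ⟨LinearMap.mkContinuous
        { toFun := fun η => ⟨t k η, (hterm k η (lp.memℓp η)).1⟩
          map_add' := by
            intro η₁ η₂
            apply lp.ext
            funext g
            simp only [htdef, lp.coeFn_add, Pi.add_apply]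
            ring
          map_smul' := by
            intro c η
            apply lp.ext
            funext g
            simp only [htdef, lp.coeFn_smul, Pi.smul_apply, smul_eq_mul, RingHom.id_apply]
            ring }
        (‖a k‖ * L k) ?_, fun η => rfl⟩
      intro η
      refine lp.norm_le_of_tsum_le hpt (mul_nonneg (mul_nonneg (norm_nonneg _) (hL0 k)) (norm_nonneg _)) ?_
      calc (∑' g : G, ‖t k η g‖ ^ pt)
          ≤ (‖a k‖ * L k) ^ pt * ∑' g : G, ‖(η : ∀ _ : G, ℂ) g‖ ^ pt :=
            (hterm k η (lp.memℓp η)).2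
        _ = (‖a k‖ * L k) ^ pt * ‖η‖ ^ pt := by rw [lp.norm_rpow_eq_tsum hpt]
        _ = (‖a k‖ * L k * ‖η‖) ^ pt := by
            rw [Real.mul_rpow (mul_nonneg (norm_nonneg _) (hL0 k)) (norm_nonneg _)]
    choose Tk hTk using hTk
    refine ⟨∑ k ∈ s, Tk k, ?_⟩
    intro ξ hsfin hξ hF
    apply lp.ext
    have hcoe : ((∑ k ∈ s, Tk k) ⟨ξ, hξ⟩ : ∀ _ : G, ℂ)
        = fun g => ∑ k ∈ s, t k ξ g := by
      rw [ContinuousLinearMap.sum_apply, lp.coeFn_sum]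
      funext g
      rw [Finset.sum_apply]
      refine Finset.sum_congr rfl fun k _ => ?_
      rw [hTk k ⟨ξ, hξ⟩]
    rw [hcoe]
    funext g
    exact (hFsum ξ g).symm
end
end

section
/- Let L be a proper length function on G and let F^p_r(G) denote the closure in the Banach algebra of bounded operators on ℓ^p(G) of the set {λ_p(a) : a ∈ ℓ¹(G)}. Then the set of all T ∈ F^p_r(G) for which there exists C ≥ 0 such that for every finitely supported ξ : G → ℂ the function g ↦ L(g)·(Tξ)(g) − (T(L·ξ))(g) belongs to ℓ^p(G) with norm at most C‖ξ‖_p, is a subalgebra of F^p_r(G) that is dense in F^p_r(G); indeed it contains λ_p(a) for every finitely supported a : G → ℂ. -/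
set_option linter.unusedSectionVars false
set_option linter.unnecessarySimpa false
set_option maxHeartbeats 1000000
set_option synthInstance.maxHeartbeats 400000


noncomputable section
open scoped ENNReal Topology
open Function Filter
open scoped Pointwise

/-- The reduced group `L^p`-operator algebra `F^p_r(G)`, realized as a subset of the
bounded operators on `ℓ^p(G)`: the operator-norm closure of `λ_p(ℓ¹(G))`. -/
def Frp (p : ℝ≥0∞) [Fact (1 ≤ p)] (G : Type*) [Group G] :
    Set (lp (fun _ : G => ℂ) p →L[ℂ] lp (fun _ : G => ℂ) p) :=
  closure {T | ∃ a : G → ℂ, Memℓp a 1 ∧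
    ∀ ξ : lp (fun _ : G => ℂ) p, ⇑(T ξ) = conv a ⇑ξ}

namespace Stmt4Aux

variable {G : Type*} [Group G] {p : ℝ≥0∞} [Fact (1 ≤ p)]

lemma pne0 : p ≠ 0 := (lt_of_lt_of_le zero_lt_one Fact.out).ne'

lemma qpos (hp' : p ≠ ∞) : 0 < p.toReal := ENNReal.toReal_pos pne0 hp'

lemma memℓp_of_finite {q : ℝ≥0∞} {f : G → ℂ} (hf : (Function.support f).Finite) :
    Memℓp f q := (memℓp_zero hf).of_exponent_ge zero_le

lemma l1_summable {a : G → ℂ} (ha : Memℓp a 1) : Summable fun k => ‖a k‖ := by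
  have := ha.summable (by norm_num)
  simpa using this

lemma memℓp_translate (hp' : p ≠ ∞) (k : G) {f : G → ℂ} (hf : Memℓp f p) :
    Memℓp (fun g => f (k⁻¹ * g)) p := by
  rw [memℓp_gen_iff (qpos hp')] at hf ⊢
  exact ((Equiv.mulLeft k⁻¹).summable_iff
    (f := fun g => ‖f g‖ ^ p.toReal)).2 hf

/-- evaluation as a continuous linear functional -/
def evalCLM (p : ℝ≥0∞) [Fact (1 ≤ p)] (g : G) : lp (fun _ : G => ℂ) p →L[ℂ] ℂ :=
  LinearMap.mkContinuous
    { toFun := fun ξ => ξ g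
      map_add' := fun ξ η => congrFun (lp.coeFn_add ξ η) g
      map_smul' := fun c ξ => by
        simpa using congrFun (lp.coeFn_smul c ξ) g }
    1 (fun ξ => by rw [one_mul]; exact lp.norm_apply_le_norm pne0 ξ g)

@[simp] lemma evalCLM_apply (g : G) (ξ : lp (fun _ : G => ℂ) p) :
    evalCLM p g ξ = ξ g := rfl

lemma norm_translate (hp' : p ≠ ∞) (k : G) (ξ v : lp (fun _ : G => ℂ) p)
    (hv : ∀ g, v g = ξ (k⁻¹ * g)) : ‖v‖ = ‖ξ‖ := by
  refine Real.rpow_left_injOn (qpos hp').ne' (lp.norm_nonneg' v) (lp.norm_nonneg' ξ) ?_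
  show ‖v‖ ^ p.toReal = ‖ξ‖ ^ p.toReal
  rw [lp.norm_rpow_eq_tsum (qpos hp') v, lp.norm_rpow_eq_tsum (qpos hp') ξ]
  calc (∑' g, ‖v g‖ ^ p.toReal) = ∑' g, ‖ξ (k⁻¹ * g)‖ ^ p.toReal := by
        congr 1; funext g; rw [hv]
    _ = ∑' g, ‖ξ g‖ ^ p.toReal :=
        (Equiv.mulLeft k⁻¹).tsum_eq (fun g => ‖ξ g‖ ^ p.toReal)

/-- translation operator -/
def transCLM (p : ℝ≥0∞) [Fact (1 ≤ p)] (hp' : p ≠ ∞) (k : G) :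
    lp (fun _ : G => ℂ) p →L[ℂ] lp (fun _ : G => ℂ) p :=
  LinearMap.mkContinuous
    { toFun := fun ξ => ⟨fun g => ξ (k⁻¹ * g), memℓp_translate hp' k (lp.memℓp ξ)⟩
      map_add' := fun ξ η => by
        apply lp.ext; funext g
        simp [lp.coeFn_add]; rfl
      map_smul' := fun c ξ => by
        apply lp.ext; funext g
        simp [lp.coeFn_smul] }
    1 (fun ξ => by
        rw [one_mul]
        exact le_of_eq (norm_translate hp' k ξ _ (fun g => rfl)))

@[simp] lemma transCLM_apply (hp' : p ≠ ∞) (k : G) (ξ : lp (fun _ : G => ℂ) p) (g : G) :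
    transCLM p hp' k ξ g = ξ (k⁻¹ * g) := rfl

lemma norm_transCLM (hp' : p ≠ ∞) (k : G) (ξ : lp (fun _ : G => ℂ) p) :
    ‖transCLM p hp' k ξ‖ = ‖ξ‖ :=
  norm_translate hp' k ξ _ (fun _ => rfl)


lemma summable_conv_term {a : G → ℂ} (ha : Summable fun k => ‖a k‖)
    (ξ : lp (fun _ : G => ℂ) p) (g : G) :
    Summable fun k => a k * ξ (k⁻¹ * g) := by
  apply Summable.of_norm
  apply Summable.of_nonneg_of_le (fun k => norm_nonneg _) _ (ha.mul_right ‖ξ‖)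
  intro k
  rw [norm_mul]
  exact mul_le_mul_of_nonneg_left (lp.norm_apply_le_norm pne0 ξ _) (norm_nonneg _)

lemma conv_sub {a b : G → ℂ} (ha : Summable fun k => ‖a k‖) (hb : Summable fun k => ‖b k‖)
    (ξ : lp (fun _ : G => ℂ) p) :
    conv (a - b) ⇑ξ = conv a ⇑ξ - conv b ⇑ξ := by
  funext g
  simp only [conv, Pi.sub_apply, sub_mul]
  exact Summable.tsum_sub (summable_conv_term ha ξ g) (summable_conv_term hb ξ g)

/-- Young's inequality bound. -/
lemma norm_le_of_conv (hp' : p ≠ ∞) {b : G → ℂ} (hb : Summable fun k => ‖b k‖)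
    (ξ v : lp (fun _ : G => ℂ) p) (hv : ⇑v = conv b ⇑ξ) :
    ‖v‖ ≤ (∑' k, ‖b k‖) * ‖ξ‖ := by
  have hsum : Summable fun k => b k • transCLM p hp' k ξ := by
    apply Summable.of_norm
    have : (fun k => ‖b k • transCLM p hp' k ξ‖) = fun k => ‖b k‖ * ‖ξ‖ := by
      funext k; rw [norm_smul, norm_transCLM]
    rw [this]
    exact hb.mul_right _
  have hw : v = ∑' k, b k • transCLM p hp' k ξ := by
    apply lp.ext; funext g
    have h1 : evalCLM p g (∑' k, b k • transCLM p hp' k ξ)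
        = ∑' k, evalCLM p g (b k • transCLM p hp' k ξ) :=
      (evalCLM p g).map_tsum hsum
    have h2 : ∀ k : G, evalCLM p g (b k • transCLM p hp' k ξ) = b k * ξ (k⁻¹ * g) := by
      intro k
      rw [map_smul]
      simp [smul_eq_mul]
    calc v g = conv b (⇑ξ) g := by rw [hv]
      _ = ∑' k, b k * ξ (k⁻¹ * g) := rfl
      _ = ∑' k, evalCLM p g (b k • transCLM p hp' k ξ) := by
          exact tsum_congr fun k => (h2 k).symm
      _ = evalCLM p g (∑' k, b k • transCLM p hp' k ξ) := h1.symm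
      _ = (∑' k, b k • transCLM p hp' k ξ) g := rfl
  rw [hw]
  refine (norm_tsum_le_tsum_norm ?_).trans ?_
  · have : (fun k => ‖b k • transCLM p hp' k ξ‖) = fun k => ‖b k‖ * ‖ξ‖ := by
      funext k; rw [norm_smul, norm_transCLM]
    rw [this]; exact hb.mul_right _
  · have : (fun k => ‖b k • transCLM p hp' k ξ‖) = fun k => ‖b k‖ * ‖ξ‖ := by
      funext k; rw [norm_smul, norm_transCLM]
    rw [this, tsum_mul_right]

lemma conv_eq_sum {a : G → ℂ} (ha : (Function.support a).Finite) (ξ : G → ℂ) (g : G) :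
    conv a ξ g = ∑ k ∈ ha.toFinset, a k * ξ (k⁻¹ * g) := by
  refine tsum_eq_sum (fun k hk => ?_)
  have : a k = 0 := by
    by_contra h
    exact hk (ha.mem_toFinset.2 h)
  rw [this, zero_mul]

/-- λ_p(a) for finitely supported a. -/
def Tfin (p : ℝ≥0∞) [Fact (1 ≤ p)] (hp' : p ≠ ∞) {a : G → ℂ}
    (ha : (Function.support a).Finite) :
    lp (fun _ : G => ℂ) p →L[ℂ] lp (fun _ : G => ℂ) p :=
  ∑ k ∈ ha.toFinset, a k • transCLM p hp' k

lemma Tfin_apply (hp' : p ≠ ∞) {a : G → ℂ} (ha : (Function.support a).Finite)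
    (ξ : lp (fun _ : G => ℂ) p) : ⇑(Tfin p hp' ha ξ) = conv a ⇑ξ := by
  funext g
  rw [conv_eq_sum ha]
  rw [Tfin, ContinuousLinearMap.sum_apply]
  rw [congrFun (lp.coeFn_sum (fun k => (a k • transCLM p hp' k) ξ) ha.toFinset) g]
  rw [Finset.sum_apply]
  refine Finset.sum_congr rfl (fun k _ => ?_)
  rw [ContinuousLinearMap.smul_apply]
  rw [congrFun (lp.coeFn_smul (a k) (transCLM p hp' k ξ)) g]
  simp [smul_eq_mul]

lemma lp_norm_le_of_le (hp' : p ≠ ∞) {u v : lp (fun _ : G => ℂ) p}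
    (h : ∀ g, ‖u g‖ ≤ ‖v g‖) : ‖u‖ ≤ ‖v‖ := by
  refine lp.norm_le_of_forall_sum_le (qpos hp') (lp.norm_nonneg' v) (fun s => ?_)
  refine le_trans ?_ (lp.sum_rpow_le_norm_rpow (qpos hp') v s)
  exact Finset.sum_le_sum fun i _ => Real.rpow_le_rpow (norm_nonneg _) (h i) (qpos hp').le

lemma coe_sum_single [DecidableEq G] (v : lp (fun _ : G => ℂ) p) (s : Finset G) (g : G) :
    (↑(∑ i ∈ s, lp.single p i (v i)) : ∀ _ : G, ℂ) g = if g ∈ s then v g else 0 := by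
  classical
  rw [congrFun (lp.coeFn_sum (fun i => lp.single p i (v i)) s) g, Finset.sum_apply]
  simp [lp.single_apply]

lemma norm_sum_single_le [DecidableEq G] (hp' : p ≠ ∞) (v : lp (fun _ : G => ℂ) p) (s : Finset G) :
    ‖∑ i ∈ s, lp.single p i (v i)‖ ≤ ‖v‖ := by
  rw [← Real.rpow_le_rpow_iff (norm_nonneg _) (lp.norm_nonneg' v) (qpos hp')]
  rw [lp.norm_sum_single (qpos hp') (⇑v) s]
  exact lp.sum_rpow_le_norm_rpow (qpos hp') v s

lemma conv_eq_sum' {a : G → ℂ} {t : Finset G} (h : ∀ k ∉ t, a k = 0) (ξ : G → ℂ) (g : G) :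
    conv a ξ g = ∑ k ∈ t, a k * ξ (k⁻¹ * g) :=
  tsum_eq_sum (fun k hk => by rw [h k hk, zero_mul])

/-- associativity of convolution for finitely supported symbols -/
lemma conv_assoc_fin [DecidableEq G] {a b : G → ℂ} (ha : (Function.support a).Finite)
    (hb : (Function.support b).Finite) (ξ : G → ℂ)
    (hc : ∀ m, m ∉ Finset.image (fun q : G × G => q.1 * q.2) (ha.toFinset ×ˢ hb.toFinset) →
      (∑ k ∈ ha.toFinset, a k * b (k⁻¹ * m)) = 0) :
    conv a (conv b ξ) = conv (fun m => ∑ k ∈ ha.toFinset, a k * b (k⁻¹ * m)) ξ := by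
  classical
  set sa := ha.toFinset
  set sb := hb.toFinset
  set t := Finset.image (fun q : G × G => q.1 * q.2) (sa ×ˢ sb) with ht
  funext g
  rw [conv_eq_sum ha, conv_eq_sum' hc]
  simp only [Finset.sum_mul]
  rw [Finset.sum_comm]
  refine Finset.sum_congr rfl (fun k hk => ?_)
  have hsub : sb.image (fun j => k * j) ⊆ t := by
    intro m hm
    obtain ⟨j, hj, rfl⟩ := Finset.mem_image.1 hm
    exact Finset.mem_image.2 ⟨(k, j), Finset.mem_product.2 ⟨hk, hj⟩, rfl⟩
  have hvanish : ∀ m ∈ t, m ∉ sb.image (fun j => k * j) → a k * b (k⁻¹ * m) * ξ (m⁻¹ * g) = 0 := by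
    intro m _ hm
    have hb0 : b (k⁻¹ * m) = 0 := by
      by_contra h0
      exact hm (Finset.mem_image.2 ⟨k⁻¹ * m, hb.mem_toFinset.2 h0, by group⟩)
    rw [hb0, mul_zero, zero_mul]
  have h1 : ∑ m ∈ t, a k * b (k⁻¹ * m) * ξ (m⁻¹ * g)
      = ∑ m ∈ sb.image (fun j => k * j), a k * b (k⁻¹ * m) * ξ (m⁻¹ * g) :=
    (Finset.sum_subset hsub hvanish).symm
  have h2 : ∑ m ∈ sb.image (fun j => k * j), a k * b (k⁻¹ * m) * ξ (m⁻¹ * g)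
      = ∑ j ∈ sb, a k * b (k⁻¹ * (k * j)) * ξ ((k * j)⁻¹ * g) :=
    Finset.sum_image (fun x _ y _ h => by simpa using mul_left_cancel h)
  rw [h1, h2, conv_eq_sum hb _ (k⁻¹ * g), Finset.mul_sum]
  refine Finset.sum_congr rfl (fun j _ => ?_)
  have e1 : k⁻¹ * (k * j) = j := by group
  have e2 : (k * j)⁻¹ * g = j⁻¹ * (k⁻¹ * g) := by group
  rw [e1, e2, mul_assoc]


/-- the generating set of `Frp`. -/
def Aset (p : ℝ≥0∞) [Fact (1 ≤ p)] (G : Type*) [Group G] :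
    Set (lp (fun _ : G => ℂ) p →L[ℂ] lp (fun _ : G => ℂ) p) :=
  {T | ∃ a : G → ℂ, Memℓp a 1 ∧
    ∀ ξ : lp (fun _ : G => ℂ) p, ⇑(T ξ) = conv a ⇑ξ}

lemma Frp_eq_closure_Aset : Frp p G = closure (Aset p G) := rfl

/-- the set of operators with finitely supported symbol. -/
def A0set (p : ℝ≥0∞) [Fact (1 ≤ p)] (G : Type*) [Group G] :
    Set (lp (fun _ : G => ℂ) p →L[ℂ] lp (fun _ : G => ℂ) p) :=
  {T | ∃ a : G → ℂ, (Function.support a).Finite ∧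
    ∀ ξ : lp (fun _ : G => ℂ) p, ⇑(T ξ) = conv a ⇑ξ}

lemma A0set_subset_Aset : A0set p G ⊆ Aset p G := by
  rintro T ⟨a, ha, hTa⟩
  exact ⟨a, memℓp_of_finite ha, hTa⟩

lemma indicator_support_finite (a : G → ℂ) (s : Finset G) :
    (Function.support (Set.indicator (↑s : Set G) a)).Finite :=
  s.finite_toSet.subset Set.support_indicator_subset

lemma Tfin_mem_A0set (hp' : p ≠ ∞) {a : G → ℂ} (ha : (Function.support a).Finite) :
    Tfin p hp' ha ∈ A0set p G :=
  ⟨a, ha, Tfin_apply hp' ha⟩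

/-- truncation of the symbol approximates in operator norm. -/
lemma approx_A0 (hp' : p ≠ ∞) {T : lp (fun _ : G => ℂ) p →L[ℂ] lp (fun _ : G => ℂ) p}
    (hT : T ∈ Aset p G) {ε : ℝ} (hε : 0 < ε) :
    ∃ T' ∈ A0set p G, ‖T - T'‖ < ε := by
  obtain ⟨a, ha1, hTa⟩ := hT
  have hs : Summable fun k => ‖a k‖ := l1_summable ha1
  obtain ⟨s, hstail⟩ : ∃ s : Finset G, (∑' k : {x // x ∉ s}, ‖a k‖) < ε :=
    ((tendsto_order.1 (tendsto_tsum_compl_atTop_zero (fun k => ‖a k‖))).2 ε hε).exists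
  set b := Set.indicator (↑s : Set G) a with hb
  have hbfin := indicator_support_finite a s
  refine ⟨Tfin p hp' hbfin, Tfin_mem_A0set hp' hbfin, ?_⟩
  have hbs : Summable fun k => ‖b k‖ := by
    apply Summable.of_nonneg_of_le (fun k => norm_nonneg _) _ hs
    intro k
    rw [hb]
    by_cases hks : k ∈ (↑s : Set G)
    · rw [Set.indicator_of_mem hks]
    · rw [Set.indicator_of_notMem hks]; simp
  have habs : (fun k => ‖(a - b) k‖) = Set.indicator ((↑s : Set G)ᶜ) (fun k => ‖a k‖) := by
    funext k
    by_cases hks : k ∈ (↑s : Set G)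
    · simp [hb, Set.indicator_of_mem hks, Set.indicator_of_notMem (by simpa using hks : k ∉ (↑s : Set G)ᶜ)]
    · simp [hb, Set.indicator_of_notMem hks, Set.indicator_of_mem (by simpa using hks : k ∈ (↑s : Set G)ᶜ)]
  have hsum2 : Summable fun k => ‖(a - b) k‖ := by
    rw [habs]; exact hs.indicator _
  have htail : (∑' k, ‖(a - b) k‖) = ∑' k : {x // x ∉ s}, ‖a k‖ := by
    rw [habs, ← tsum_subtype]
    exact ((Equiv.subtypeEquivRight (fun x => by simp)).tsum_eq
      (fun k : {x // x ∉ s} => ‖a (k : G)‖)).symm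
  have key : ∀ ξ : lp (fun _ : G => ℂ) p,
      ‖(T - Tfin p hp' hbfin) ξ‖ ≤ (∑' k : {x // x ∉ s}, ‖a k‖) * ‖ξ‖ := by
    intro ξ
    have hcoe : ⇑((T - Tfin p hp' hbfin) ξ) = conv (a - b) ⇑ξ := by
      rw [ContinuousLinearMap.sub_apply, lp.coeFn_sub, hTa ξ, Tfin_apply hp' hbfin ξ,
        ← conv_sub hs hbs]
    have h := norm_le_of_conv hp' hsum2 ξ _ hcoe
    rwa [htail] at h
  have hle : ‖T - Tfin p hp' hbfin‖ ≤ ∑' k : {x // x ∉ s}, ‖a k‖ :=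
    ContinuousLinearMap.opNorm_le_bound _ (tsum_nonneg (fun k => norm_nonneg _)) key
  exact lt_of_le_of_lt hle hstail

lemma conv_add {a b : G → ℂ} (ha : Summable fun k => ‖a k‖) (hb : Summable fun k => ‖b k‖)
    (ξ : lp (fun _ : G => ℂ) p) :
    conv (a + b) ⇑ξ = conv a ⇑ξ + conv b ⇑ξ := by
  funext g
  simp only [conv, Pi.add_apply, add_mul]
  exact Summable.tsum_add (summable_conv_term ha ξ g) (summable_conv_term hb ξ g)

lemma smul_mem_Aset (cc : ℂ) {T : lp (fun _ : G => ℂ) p →L[ℂ] lp (fun _ : G => ℂ) p}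
    (hT : T ∈ Aset p G) : cc • T ∈ Aset p G := by
  obtain ⟨a, ha, hTa⟩ := hT
  refine ⟨cc • a, ha.const_smul cc, fun ξ => funext fun g => ?_⟩
  have h1 : ((cc • T) ξ) g = cc * (T ξ) g := by
    rw [ContinuousLinearMap.smul_apply, congrFun (lp.coeFn_smul cc (T ξ)) g]
    simp
  have h2 : conv (cc • a) ⇑ξ g = cc * conv a ⇑ξ g := by
    simp only [conv, Pi.smul_apply, smul_eq_mul, mul_assoc]
    exact tsum_mul_left
  rw [h1, h2, congrFun (hTa ξ) g]

lemma add_mem_Aset {S T : lp (fun _ : G => ℂ) p →L[ℂ] lp (fun _ : G => ℂ) p}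
    (hS : S ∈ Aset p G) (hT : T ∈ Aset p G) : S + T ∈ Aset p G := by
  obtain ⟨a, ha, hSa⟩ := hS
  obtain ⟨b, hb, hTb⟩ := hT
  refine ⟨a + b, ha.add hb, fun ξ => ?_⟩
  rw [conv_add (l1_summable ha) (l1_summable hb), ContinuousLinearMap.add_apply,
    lp.coeFn_add, hSa ξ, hTb ξ]

lemma mul_mem_A0set {S T : lp (fun _ : G => ℂ) p →L[ℂ] lp (fun _ : G => ℂ) p}
    (hS : S ∈ A0set p G) (hT : T ∈ A0set p G) : S * T ∈ A0set p G := by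
  classical
  obtain ⟨a, ha, hSa⟩ := hS
  obtain ⟨b, hb, hTb⟩ := hT
  set c : G → ℂ := fun m => ∑ k ∈ ha.toFinset, a k * b (k⁻¹ * m) with hcdef
  set t := Finset.image (fun q : G × G => q.1 * q.2) (ha.toFinset ×ˢ hb.toFinset) with htdef
  have hc0 : ∀ m ∉ t, c m = 0 := by
    intro m hm
    by_contra h0
    obtain ⟨k, hk, hk0⟩ := Finset.exists_ne_zero_of_sum_ne_zero h0
    have hak : a k ≠ 0 := fun h => hk0 (by rw [h, zero_mul])
    have hbk : b (k⁻¹ * m) ≠ 0 := fun h => hk0 (by rw [h, mul_zero])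
    exact hm (Finset.mem_image.2 ⟨(k, k⁻¹ * m),
      Finset.mem_product.2 ⟨hk, hb.mem_toFinset.2 hbk⟩, by group⟩)
  have hcfin : (Function.support c).Finite := by
    apply t.finite_toSet.subset
    intro m hm
    by_contra hmt
    exact hm (hc0 m hmt)
  refine ⟨c, hcfin, fun ξ => ?_⟩
  rw [ContinuousLinearMap.mul_apply, hSa (T ξ), hTb ξ, conv_assoc_fin ha hb _ hc0]

lemma Frp_smul (cc : ℂ) {S : lp (fun _ : G => ℂ) p →L[ℂ] lp (fun _ : G => ℂ) p}
    (hS : S ∈ Frp p G) : cc • S ∈ Frp p G := by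
  rw [Frp_eq_closure_Aset] at hS ⊢
  obtain ⟨u, hu, hlim⟩ := mem_closure_iff_seq_limit.1 hS
  exact mem_closure_iff_seq_limit.2
    ⟨fun n => cc • u n, fun n => smul_mem_Aset cc (hu n), hlim.const_smul cc⟩

lemma Frp_add {S T : lp (fun _ : G => ℂ) p →L[ℂ] lp (fun _ : G => ℂ) p}
    (hS : S ∈ Frp p G) (hT : T ∈ Frp p G) : S + T ∈ Frp p G := by
  rw [Frp_eq_closure_Aset] at hS hT ⊢
  obtain ⟨u, hu, hulim⟩ := mem_closure_iff_seq_limit.1 hS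
  obtain ⟨v, hv, hvlim⟩ := mem_closure_iff_seq_limit.1 hT
  exact mem_closure_iff_seq_limit.2
    ⟨fun n => u n + v n, fun n => add_mem_Aset (hu n) (hv n), hulim.add hvlim⟩

lemma seq_A0_tendsto (hp' : p ≠ ∞) {S : lp (fun _ : G => ℂ) p →L[ℂ] lp (fun _ : G => ℂ) p}
    (hS : S ∈ Frp p G) :
    ∃ w : ℕ → lp (fun _ : G => ℂ) p →L[ℂ] lp (fun _ : G => ℂ) p,
      (∀ n, w n ∈ A0set p G) ∧ Tendsto w atTop (𝓝 S) := by
  rw [Frp_eq_closure_Aset] at hS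
  obtain ⟨u, hu, hulim⟩ := mem_closure_iff_seq_limit.1 hS
  have h : ∀ n : ℕ, ∃ T' ∈ A0set p G, ‖u n - T'‖ < 1 / (n + 1) :=
    fun n => approx_A0 hp' (hu n) (by positivity)
  choose w hw hwn using h
  refine ⟨w, hw, ?_⟩
  have h0 : Tendsto (fun n => u n - w n) atTop (𝓝 0) := by
    apply squeeze_zero_norm (fun n => (hwn n).le)
    exact tendsto_one_div_add_atTop_nhds_zero_nat
  have := hulim.sub h0
  simpa using this

lemma Frp_mul (hp' : p ≠ ∞) {S T : lp (fun _ : G => ℂ) p →L[ℂ] lp (fun _ : G => ℂ) p}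
    (hS : S ∈ Frp p G) (hT : T ∈ Frp p G) : S * T ∈ Frp p G := by
  obtain ⟨w, hw, hwlim⟩ := seq_A0_tendsto hp' hS
  obtain ⟨w', hw', hwlim'⟩ := seq_A0_tendsto hp' hT
  rw [Frp_eq_closure_Aset]
  exact mem_closure_iff_seq_limit.2
    ⟨fun n => w n * w' n,
     fun n => A0set_subset_Aset (mul_mem_A0set (hw n) (hw' n)),
     hwlim.mul hwlim'⟩

/-- The commutator condition appearing in the definition of the Lipschitz algebra. -/
def Pprop (p : ℝ≥0∞) [Fact (1 ≤ p)] {G : Type*} [Group G] (L : G → ℝ)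
    (T : lp (fun _ : G => ℂ) p →L[ℂ] lp (fun _ : G => ℂ) p) (C : ℝ) : Prop :=
  ∀ ξ : lp (fun _ : G => ℂ) p, (Function.support ⇑ξ).Finite →
    ∀ hLξ : Memℓp (fun g => (L g : ℂ) * ξ g) p,
      ∃ hc : Memℓp (fun g => (L g : ℂ) * (T ξ) g - (T ⟨_, hLξ⟩) g) p,
        ‖(⟨_, hc⟩ : lp (fun _ : G => ℂ) p)‖ ≤ C * ‖ξ‖

/-- The commutator estimate extends from finitely supported vectors to all vectors `η`
with `L·η ∈ ℓᵖ`. -/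
lemma Pprop_extend (hp' : p ≠ ∞) {L : G → ℝ}
    {T : lp (fun _ : G => ℂ) p →L[ℂ] lp (fun _ : G => ℂ) p} {C : ℝ}
    (hC : 0 ≤ C) (hP : Pprop p L T C)
    (η : lp (fun _ : G => ℂ) p) (hLη : Memℓp (fun g => (L g : ℂ) * η g) p) :
    ∃ hc : Memℓp (fun g => (L g : ℂ) * (T η) g - (T ⟨_, hLη⟩) g) p,
      ‖(⟨_, hc⟩ : lp (fun _ : G => ℂ) p)‖ ≤ C * ‖η‖ := by
  classical
  set w : lp (fun _ : G => ℂ) p := ⟨fun g => (L g : ℂ) * η g, hLη⟩ with hw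
  set tr : Finset G → lp (fun _ : G => ℂ) p := fun s => ∑ i ∈ s, lp.single p i (η i) with htr
  have htr_coe : ∀ (s : Finset G) (g : G), (tr s) g = if g ∈ s then η g else 0 :=
    fun s g => coe_sum_single η s g
  have htr_supp : ∀ s : Finset G, (Function.support ⇑(tr s)).Finite := by
    intro s
    apply s.finite_toSet.subset
    intro g hg
    by_contra hgs
    exact hg (by rw [htr_coe s g, if_neg (by simpa using hgs)])
  have htrL : ∀ s : Finset G, Memℓp (fun g => (L g : ℂ) * (tr s) g) p := by
    intro s
    apply memℓp_of_finite
    apply s.finite_toSet.subset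
    intro g hg
    by_contra hgs
    apply hg
    show (L g : ℂ) * (tr s) g = 0
    rw [htr_coe s g, if_neg (by simpa using hgs), mul_zero]
  have hwtr : ∀ s : Finset G,
      (⟨fun g => (L g : ℂ) * (tr s) g, htrL s⟩ : lp (fun _ : G => ℂ) p)
        = ∑ i ∈ s, lp.single p i (w i) := by
    intro s
    apply lp.ext; funext g
    have h1 : (↑(∑ i ∈ s, lp.single p i (w i)) : ∀ _ : G, ℂ) g = if g ∈ s then w g else 0 :=
      coe_sum_single w s g
    rw [h1]
    show (L g : ℂ) * (tr s) g = _
    rw [htr_coe s g]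
    by_cases hgs : g ∈ s
    · simp only [if_pos hgs]; rfl
    · simp only [if_neg hgs, mul_zero]
  have hPs := fun s : Finset G => hP (tr s) (htr_supp s) (htrL s)
  choose hcs hbound using hPs
  set F : Finset G → lp (fun _ : G => ℂ) p := fun s => ⟨_, hcs s⟩ with hF
  have hFb : ∀ s, ‖F s‖ ≤ C * ‖η‖ := fun s =>
    (hbound s).trans (mul_le_mul_of_nonneg_left (norm_sum_single_le hp' η s) hC)
  have h1 : Tendsto (fun s => T (tr s)) atTop (𝓝 (T η)) :=
    (T.continuous.tendsto η).comp (lp.hasSum_single hp' η)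
  have h2 : Tendsto (fun s : Finset G => T ⟨fun g => (L g : ℂ) * (tr s) g, htrL s⟩)
      atTop (𝓝 (T w)) := by
    have hww := (T.continuous.tendsto w).comp (lp.hasSum_single hp' w)
    have : (fun s : Finset G => T ⟨fun g => (L g : ℂ) * (tr s) g, htrL s⟩)
        = fun s => T (∑ i ∈ s, lp.single p i (w i)) := by
      funext s; rw [hwtr s]
    rw [this]
    exact hww
  have hpt : ∀ g : G, Tendsto (fun s : Finset G => (F s) g) atTop
      (𝓝 ((L g : ℂ) * (T η) g - (T w) g)) := by
    intro g
    have e1 : Tendsto (fun s : Finset G => (T (tr s)) g) atTop (𝓝 ((T η) g)) :=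
      (((evalCLM p g).continuous.tendsto (T η))).comp h1
    have e2 : Tendsto (fun s : Finset G => (T ⟨fun g => (L g : ℂ) * (tr s) g, htrL s⟩) g)
        atTop (𝓝 ((T w) g)) :=
      (((evalCLM p g).continuous.tendsto (T w))).comp h2
    exact (e1.const_mul _).sub e2
  have hptpi : Tendsto (fun s : Finset G => ⇑(F s)) atTop
      (𝓝 (fun g => (L g : ℂ) * (T η) g - (T w) g)) := tendsto_pi_nhds.2 hpt
  have hbdd : Bornology.IsBounded (Set.range F) := by
    rw [isBounded_iff_forall_norm_le]
    exact ⟨C * ‖η‖, by rintro x ⟨s, rfl⟩; exact hFb s⟩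
  have hmem : Memℓp (fun g => (L g : ℂ) * (T η) g - (T w) g) p :=
    lp.memℓp_of_tendsto hbdd hptpi
  exact ⟨hmem, lp.norm_le_of_tendsto (Eventually.of_forall hFb) hptpi⟩

/-- The fundamental commutator estimate for finitely supported symbols. -/
lemma key_estimate (hp' : p ≠ ∞) {L : G → ℝ} (hL : IsProperLengthFunction L)
    {a : G → ℂ} (ha : (Function.support a).Finite)
    (T : lp (fun _ : G => ℂ) p →L[ℂ] lp (fun _ : G => ℂ) p)
    (hTa : ∀ ξ : lp (fun _ : G => ℂ) p, ⇑(T ξ) = conv a ⇑ξ) :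
    Pprop p L T (∑ k ∈ ha.toFinset, ‖a k‖ * L k) := by
  classical
  obtain ⟨⟨hpos, _, htri, hsymm⟩, _⟩ := hL
  intro ξ hξ hLξ
  set sa := ha.toFinset with hsa
  have hLbound : ∀ k g : G, |L g - L (k⁻¹ * g)| ≤ L k := by
    intro k g
    rw [abs_sub_le_iff]
    constructor
    · have h := htri k (k⁻¹ * g)
      rw [mul_inv_cancel_left] at h
      linarith
    · have h := htri k⁻¹ g
      rw [hsymm] at h
      linarith
  set fk : G → G → ℂ := fun k g => a k * (((L g : ℝ) - (L (k⁻¹ * g) : ℝ) : ℝ) * ξ (k⁻¹ * g))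
    with hfk
  have hfk_fin : ∀ k, (Function.support (fk k)).Finite := by
    intro k
    apply (hξ.image (fun x => k * x)).subset
    intro g hg
    have hξg : ξ (k⁻¹ * g) ≠ 0 := by
      intro h0
      apply hg
      show fk k g = 0
      rw [hfk]
      simp [h0]
    exact ⟨k⁻¹ * g, hξg, by group⟩
  have hfk_mem : ∀ k, Memℓp (fk k) p := fun k => memℓp_of_finite (hfk_fin k)
  have hid : (fun g => (L g : ℂ) * (T ξ) g - (T ⟨_, hLξ⟩) g)
      = fun g => ∑ k ∈ sa, fk k g := by
    funext g
    rw [congrFun (hTa ξ) g, congrFun (hTa ⟨_, hLξ⟩) g]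
    show (L g : ℂ) * conv a (⇑ξ) g - conv a (fun g => (L g : ℂ) * ξ g) g = _
    rw [conv_eq_sum ha, conv_eq_sum ha, Finset.mul_sum, ← Finset.sum_sub_distrib]
    refine Finset.sum_congr rfl fun k _ => ?_
    rw [hfk]
    push_cast
    ring
  have hc : Memℓp (fun g => (L g : ℂ) * (T ξ) g - (T ⟨_, hLξ⟩) g) p := by
    rw [hid]
    exact Memℓp.finset_sum sa (fun k _ => hfk_mem k)
  refine ⟨hc, ?_⟩
  set Fk : G → lp (fun _ : G => ℂ) p := fun k => ⟨fk k, hfk_mem k⟩ with hFk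
  have hsplit : (⟨_, hc⟩ : lp (fun _ : G => ℂ) p) = ∑ k ∈ sa, Fk k := by
    apply lp.ext; funext g
    rw [congrFun (lp.coeFn_sum Fk sa) g, Finset.sum_apply]
    exact congrFun hid g
  rw [hsplit]
  refine (norm_sum_le sa Fk).trans ?_
  rw [Finset.sum_mul]
  refine Finset.sum_le_sum fun k hk => ?_
  have hnormk : ‖((((‖a k‖ * L k : ℝ)) : ℂ))‖ = ‖a k‖ * L k := by
    rw [Complex.norm_real, Real.norm_eq_abs, abs_of_nonneg (mul_nonneg (norm_nonneg _) (hpos k))]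
  have hdom : ∀ g, ‖(Fk k) g‖ ≤
      ‖((((‖a k‖ * L k : ℝ)) : ℂ) • transCLM p hp' k ξ) g‖ := by
    intro g
    have hR : ‖((((‖a k‖ * L k : ℝ)) : ℂ) • transCLM p hp' k ξ) g‖
        = (‖a k‖ * L k) * ‖ξ (k⁻¹ * g)‖ := by
      rw [congrFun (lp.coeFn_smul _ _) g]
      simp only [Pi.smul_apply, smul_eq_mul]
      rw [norm_mul, hnormk]
      rfl
    rw [hR]
    show ‖fk k g‖ ≤ _
    rw [hfk]
    simp only []
    rw [norm_mul, norm_mul]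
    have h1 : ‖((L g - L (k⁻¹ * g) : ℝ) : ℂ)‖ ≤ L k := by
      rw [Complex.norm_real, Real.norm_eq_abs]
      exact hLbound k g
    calc ‖a k‖ * (‖((L g - L (k⁻¹ * g) : ℝ) : ℂ)‖ * ‖ξ (k⁻¹ * g)‖)
        ≤ ‖a k‖ * (L k * ‖ξ (k⁻¹ * g)‖) := by
          apply mul_le_mul_of_nonneg_left _ (norm_nonneg _)
          exact mul_le_mul_of_nonneg_right h1 (norm_nonneg _)
      _ = ‖a k‖ * L k * ‖ξ (k⁻¹ * g)‖ := by ring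
  have hle := lp_norm_le_of_le hp' hdom
  rw [norm_smul, hnormk, norm_transCLM] at hle
  exact hle.trans (le_of_eq (by ring))

end Stmt4Aux

open Stmt4Aux

theorem stmt4 (p : ℝ≥0∞) [Fact (1 ≤ p)] (hp' : p ≠ ∞)
    {G : Type*} [Group G] [Countable G]
    (L : G → ℝ) (hL : IsProperLengthFunction L)
    (Lip : Set (lp (fun _ : G => ℂ) p →L[ℂ] lp (fun _ : G => ℂ) p))
    (hLip : Lip = {T | T ∈ Frp p G ∧ ∃ C : ℝ, 0 ≤ C ∧
      ∀ ξ : lp (fun _ : G => ℂ) p, (Function.support ⇑ξ).Finite →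
        ∀ hLξ : Memℓp (fun g => (L g : ℂ) * ξ g) p,
          ∃ hc : Memℓp (fun g => (L g : ℂ) * (T ξ) g - (T ⟨_, hLξ⟩) g) p,
            ‖(⟨_, hc⟩ : lp (fun _ : G => ℂ) p)‖ ≤ C * ‖ξ‖}) :
    (∀ (cc : ℂ) (S T : lp (fun _ : G => ℂ) p →L[ℂ] lp (fun _ : G => ℂ) p),
      S ∈ Lip → T ∈ Lip → cc • S ∈ Lip ∧ S + T ∈ Lip ∧ S * T ∈ Lip) ∧
    Frp p G ⊆ closure Lip ∧
    (∀ a : G → ℂ, (Function.support a).Finite →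
      ∀ T : lp (fun _ : G => ℂ) p →L[ℂ] lp (fun _ : G => ℂ) p,
        (∀ ξ : lp (fun _ : G => ℂ) p, ⇑(T ξ) = conv a ⇑ξ) → T ∈ Lip) := by
  subst hLip
  have hpos : ∀ g, 0 ≤ L g := hL.1.1
  -- Part 3
  have part3 : ∀ a : G → ℂ, (Function.support a).Finite →
      ∀ T : lp (fun _ : G => ℂ) p →L[ℂ] lp (fun _ : G => ℂ) p,
        (∀ ξ : lp (fun _ : G => ℂ) p, ⇑(T ξ) = conv a ⇑ξ) →
        T ∈ {T | T ∈ Frp p G ∧ ∃ C : ℝ, 0 ≤ C ∧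
          ∀ ξ : lp (fun _ : G => ℂ) p, (Function.support ⇑ξ).Finite →
            ∀ hLξ : Memℓp (fun g => (L g : ℂ) * ξ g) p,
              ∃ hc : Memℓp (fun g => (L g : ℂ) * (T ξ) g - (T ⟨_, hLξ⟩) g) p,
                ‖(⟨_, hc⟩ : lp (fun _ : G => ℂ) p)‖ ≤ C * ‖ξ‖} := by
    intro a ha T hTa
    refine ⟨subset_closure ⟨a, memℓp_of_finite ha, hTa⟩,
      ∑ k ∈ ha.toFinset, ‖a k‖ * L k,
      Finset.sum_nonneg fun k _ => mul_nonneg (norm_nonneg _) (hpos k), ?_⟩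
    exact key_estimate hp' hL ha T hTa
  refine ⟨?_, ?_, part3⟩
  · -- Part 1: algebra operations
    rintro cc S T ⟨hSF, CS, hCS0, hPS⟩ ⟨hTF, CT, hCT0, hPT⟩
    refine ⟨⟨Frp_smul cc hSF, ‖cc‖ * CS, mul_nonneg (norm_nonneg _) hCS0, ?_⟩,
      ⟨Frp_add hSF hTF, CS + CT, add_nonneg hCS0 hCT0, ?_⟩,
      ⟨Frp_mul hp' hSF hTF, CS * ‖T‖ + ‖S‖ * CT,
        add_nonneg (mul_nonneg hCS0 (norm_nonneg _)) (mul_nonneg (norm_nonneg _) hCT0), ?_⟩⟩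
    · -- scalar multiple
      intro ξ hξf hLξ
      obtain ⟨hc, hb⟩ := hPS ξ hξf hLξ
      have heq : (fun g => (L g : ℂ) * ((cc • S) ξ) g - ((cc • S) ⟨_, hLξ⟩) g)
          = fun g => cc * ((L g : ℂ) * (S ξ) g - (S ⟨_, hLξ⟩) g) := by
        funext g
        rw [ContinuousLinearMap.smul_apply, ContinuousLinearMap.smul_apply,
          congrFun (lp.coeFn_smul cc (S ξ)) g, congrFun (lp.coeFn_smul cc (S ⟨_, hLξ⟩)) g]
        simp only [Pi.smul_apply, smul_eq_mul]
        ring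
      have hc' : Memℓp (fun g => (L g : ℂ) * ((cc • S) ξ) g - ((cc • S) ⟨_, hLξ⟩) g) p := by
        rw [heq]; exact hc.const_mul cc
      refine ⟨hc', ?_⟩
      have helt : (⟨_, hc'⟩ : lp (fun _ : G => ℂ) p) = cc • (⟨_, hc⟩ : lp (fun _ : G => ℂ) p) := by
        apply lp.ext
        rw [lp.coeFn_smul]
        exact heq
      rw [helt, lp.norm_const_smul pne0]
      calc ‖cc‖ * ‖(⟨_, hc⟩ : lp (fun _ : G => ℂ) p)‖ ≤ ‖cc‖ * (CS * ‖ξ‖) :=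
            mul_le_mul_of_nonneg_left hb (norm_nonneg _)
        _ = ‖cc‖ * CS * ‖ξ‖ := by ring
    · -- sum
      intro ξ hξf hLξ
      obtain ⟨hc1, hb1⟩ := hPS ξ hξf hLξ
      obtain ⟨hc2, hb2⟩ := hPT ξ hξf hLξ
      have heq : (fun g => (L g : ℂ) * ((S + T) ξ) g - ((S + T) ⟨_, hLξ⟩) g)
          = (fun g => (L g : ℂ) * (S ξ) g - (S ⟨_, hLξ⟩) g)
            + fun g => (L g : ℂ) * (T ξ) g - (T ⟨_, hLξ⟩) g := by
        funext g
        rw [Pi.add_apply, ContinuousLinearMap.add_apply, ContinuousLinearMap.add_apply,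
          congrFun (lp.coeFn_add (S ξ) (T ξ)) g,
          congrFun (lp.coeFn_add (S ⟨_, hLξ⟩) (T ⟨_, hLξ⟩)) g]
        simp only [Pi.add_apply]
        ring
      have hc' : Memℓp (fun g => (L g : ℂ) * ((S + T) ξ) g - ((S + T) ⟨_, hLξ⟩) g) p := by
        rw [heq]; exact hc1.add hc2
      refine ⟨hc', ?_⟩
      have helt : (⟨_, hc'⟩ : lp (fun _ : G => ℂ) p)
          = (⟨_, hc1⟩ : lp (fun _ : G => ℂ) p) + (⟨_, hc2⟩ : lp (fun _ : G => ℂ) p) := by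
        apply lp.ext
        rw [lp.coeFn_add]
        exact heq
      rw [helt]
      refine (norm_add_le _ _).trans ?_
      calc ‖(⟨_, hc1⟩ : lp (fun _ : G => ℂ) p)‖ + ‖(⟨_, hc2⟩ : lp (fun _ : G => ℂ) p)‖
          ≤ CS * ‖ξ‖ + CT * ‖ξ‖ := add_le_add hb1 hb2
        _ = (CS + CT) * ‖ξ‖ := by ring
    · -- product
      intro ξ hξf hLξ
      obtain ⟨hcT, hbT⟩ := hPT ξ hξf hLξ
      set D : lp (fun _ : G => ℂ) p := ⟨_, hcT⟩ with hD
      have hLη : Memℓp (fun g => (L g : ℂ) * (T ξ) g) p := by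
        have heta : (fun g => (L g : ℂ) * (T ξ) g) = ⇑D + ⇑(T ⟨_, hLξ⟩) := by
          funext g
          rw [Pi.add_apply]
          show _ = ((L g : ℂ) * (T ξ) g - (T ⟨_, hLξ⟩) g) + (T ⟨_, hLξ⟩) g
          ring
        rw [heta]
        exact Memℓp.add (lp.memℓp D) (lp.memℓp (T ⟨_, hLξ⟩))
      obtain ⟨hcS, hbS⟩ := Pprop_extend hp' hCS0 hPS (T ξ) hLη
      set w : lp (fun _ : G => ℂ) p := ⟨fun g => (L g : ℂ) * (T ξ) g, hLη⟩ with hw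
      have hweq : w - T ⟨_, hLξ⟩ = D := by
        apply lp.ext
        rw [lp.coeFn_sub]
        funext g
        rw [Pi.sub_apply]
      have heq : (fun g => (L g : ℂ) * ((S * T) ξ) g - ((S * T) ⟨_, hLξ⟩) g)
          = (fun g => (L g : ℂ) * (S (T ξ)) g - (S w) g) + ⇑(S D) := by
        funext g
        rw [Pi.add_apply]
        have hSD : (S D) g = (S w) g - (S (T ⟨_, hLξ⟩)) g := by
          rw [← hweq, map_sub, congrFun (lp.coeFn_sub (S w) (S (T ⟨_, hLξ⟩))) g]
          rfl
        rw [hSD]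
        show (L g : ℂ) * (S (T ξ)) g - (S (T ⟨_, hLξ⟩)) g = _
        ring
      have hc' : Memℓp (fun g => (L g : ℂ) * ((S * T) ξ) g - ((S * T) ⟨_, hLξ⟩) g) p := by
        rw [heq]; exact hcS.add (lp.memℓp (S D))
      refine ⟨hc', ?_⟩
      have helt : (⟨_, hc'⟩ : lp (fun _ : G => ℂ) p)
          = (⟨_, hcS⟩ : lp (fun _ : G => ℂ) p) + S D := by
        apply lp.ext
        rw [lp.coeFn_add]
        exact heq
      rw [helt]
      refine (norm_add_le _ _).trans ?_
      have h1 : ‖(⟨_, hcS⟩ : lp (fun _ : G => ℂ) p)‖ ≤ CS * (‖T‖ * ‖ξ‖) :=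
        hbS.trans (mul_le_mul_of_nonneg_left (T.le_opNorm ξ) hCS0)
      have h2 : ‖S D‖ ≤ ‖S‖ * (CT * ‖ξ‖) :=
        (S.le_opNorm D).trans (mul_le_mul_of_nonneg_left hbT (norm_nonneg _))
      calc ‖(⟨_, hcS⟩ : lp (fun _ : G => ℂ) p)‖ + ‖S D‖
          ≤ CS * (‖T‖ * ‖ξ‖) + ‖S‖ * (CT * ‖ξ‖) := add_le_add h1 h2
        _ = (CS * ‖T‖ + ‖S‖ * CT) * ‖ξ‖ := by ring
  · -- Part 2: density
    intro T hT
    have hA : Aset p G ⊆ closure {T | T ∈ Frp p G ∧ ∃ C : ℝ, 0 ≤ C ∧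
        ∀ ξ : lp (fun _ : G => ℂ) p, (Function.support ⇑ξ).Finite →
          ∀ hLξ : Memℓp (fun g => (L g : ℂ) * ξ g) p,
            ∃ hc : Memℓp (fun g => (L g : ℂ) * (T ξ) g - (T ⟨_, hLξ⟩) g) p,
              ‖(⟨_, hc⟩ : lp (fun _ : G => ℂ) p)‖ ≤ C * ‖ξ‖} := by
      intro T0 hT0
      rw [Metric.mem_closure_iff]
      intro ε hε
      obtain ⟨T', hT'A0, hlt⟩ := approx_A0 hp' hT0 hε
      obtain ⟨b, hb, hTb'⟩ := hT'A0
      exact ⟨T', part3 b hb T' hTb', by rwa [dist_eq_norm]⟩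
    have h1 : T ∈ closure (Aset p G) := hT
    have h2 := closure_mono hA h1
    rwa [closure_closure] at h2
end
end

section
/- Let n ≤ m be nonnegative integers, let ξ ∈ L^p(μ_{≤n}) and η ∈ L^p(μ_{≥n+1}). Then the product function η₁ ⊗ η₂ : X_{≥0} → ℂ, (x_0,…,x_n,𝐱) ↦ ξ(x_0,…,x_n)·η(𝐱), belongs to L^p(μ_{≥0}) with ‖ξ ⊗ η‖_p = ‖ξ‖_p‖η‖_p, and P_m(ξ ⊗ η) equals the product function (x_0,…,x_n,𝐱) ↦ ξ(x_0,…,x_n)·(P_{m,n}η)(𝐱), where P_{m,n} : L^p(μ_{≥n+1}) → L^p(μ_{≥n+1}) is defined by (P_{m,n}ζ)(x_{n+1},…,x_m,𝐳) = ∫_{X_{≥m+1}} ζ(x_{n+1},…,x_m,𝐰) dμ_{≥m+1}(𝐰). -/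
noncomputable section
open MeasureTheory Filter
open scoped ENNReal Topology

/-- A measure `ν` on a product space is *the* product of the measures `m i` if it assigns
the product value to every finite-dimensional cylinder set. -/
def IsProductMeasure {ι : Type*} {Y : ι → Type*} [∀ i, MeasurableSpace (Y i)]
    (m : ∀ i, Measure (Y i)) (ν : Measure (∀ i, Y i)) : Prop :=
  ∀ (F : Finset ι) (s : ∀ i, Set (Y i)), (∀ i, MeasurableSet (s i)) →
    ν {x | ∀ i ∈ F, x i ∈ s i} = ∏ i ∈ F, m i (s i)

variable {X : ℕ → Type*}

/-- The product measure `μ_{≤ n}` on `X_0 × ⋯ × X_n`. -/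
def muLe [∀ j, MeasurableSpace (X j)] (μ : ∀ j, Measure (X j)) (n : ℕ) :
    Measure (∀ j : Fin (n + 1), X j) :=
  Measure.pi (fun j => μ j)

/-- Splicing a point of `X_{≤ n}` with a point of `X_{≥ n+1}` gives a point of `X_{≥ 0}`. -/
def splice (n : ℕ) (x : ∀ j : Fin (n + 1), X j) (y : ∀ j : ℕ, X (n + 1 + j)) :
    ∀ j : ℕ, X j := fun j =>
  if h : j < n + 1 then x ⟨j, h⟩
  else cast (congrArg X (by omega : n + 1 + (j - (n + 1)) = j)) (y (j - (n + 1)))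

/-- The inclusion map `ι_n` at the level of functions: `(ι_n ξ)(x₀,…,xₙ,𝐱) = ξ(x₀,…,xₙ)`. -/
def iotaFun (n : ℕ) (ξ : (∀ j : Fin (n + 1), X j) → ℂ) : (∀ j : ℕ, X j) → ℂ :=
  fun x => ξ (fun j => x j)

/-- The projection map `π_n` at the level of functions:
`(π_n η)(x₀,…,xₙ) = ∫_{X_{≥ n+1}} η(x₀,…,xₙ,𝐱) dμ_{≥ n+1}(𝐱)`. -/
def piFun [∀ j, MeasurableSpace (X j)] (νtail : ∀ k, Measure (∀ j : ℕ, X (k + j)))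
    (n : ℕ) (η : (∀ j : ℕ, X j) → ℂ) : (∀ j : Fin (n + 1), X j) → ℂ :=
  fun x => ∫ y, η (splice n x y) ∂(νtail (n + 1))

/-- The idempotent `P_n = ι_n ∘ π_n` at the level of functions. -/
def PnFun [∀ j, MeasurableSpace (X j)] (νtail : ∀ k, Measure (∀ j : ℕ, X (k + j)))
    (n : ℕ) (η : (∀ j : ℕ, X j) → ℂ) : (∀ j : ℕ, X j) → ℂ :=
  iotaFun n (piFun νtail n η)

/-- `Q_0 = P_0` and `Q_n = P_n - P_{n-1}` for `n ≥ 1`, at the level of functions. -/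
def QnFun [∀ j, MeasurableSpace (X j)] (νtail : ∀ k, Measure (∀ j : ℕ, X (k + j))) :
    ℕ → ((∀ j : ℕ, X j) → ℂ) → ((∀ j : ℕ, X j) → ℂ)
  | 0 => PnFun νtail 0
  | n + 1 => fun η => PnFun νtail (n + 1) η - PnFun νtail n η

/-- The elementary tensor `ξ ⊗ η` of a function on `X_{≤ n}` and a function on `X_{≥ n+1}`,
as a function on `X_{≥ 0}`. -/
def tensFun (n : ℕ) (ξ : (∀ j : Fin (n + 1), X j) → ℂ)
    (η : (∀ j : ℕ, X (n + 1 + j)) → ℂ) : (∀ j : ℕ, X j) → ℂ :=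
  fun x => ξ (fun j => x j) * η (fun j => x (n + 1 + j))

/-- Splicing a point of `X_{(n,m]}` (the first `m - n` coordinates of `X_{≥ n+1}`) with a
point of `X_{≥ m+1}` gives a point of `X_{≥ n+1}`. -/
def spliceMid {n m : ℕ} (hnm : n ≤ m) (y : ∀ j : ℕ, X (n + 1 + j))
    (w : ∀ j : ℕ, X (m + 1 + j)) : ∀ j : ℕ, X (n + 1 + j) := fun j =>
  if h : j < m - n then y j
  else cast (congrArg X (by omega : m + 1 + (j - (m - n)) = n + 1 + j)) (w (j - (m - n)))

/-- The operator `P_{m,n}` on functions on `X_{≥ n+1}`: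
`(P_{m,n} ζ)(x_{n+1},…,x_m,𝐳) = ∫_{X_{≥ m+1}} ζ(x_{n+1},…,x_m,𝐰) dμ_{≥ m+1}(𝐰)`. -/
def PtailFun [∀ j, MeasurableSpace (X j)] (νtail : ∀ k, Measure (∀ j : ℕ, X (k + j)))
    {n m : ℕ} (hnm : n ≤ m) (ζ : (∀ j : ℕ, X (n + 1 + j)) → ℂ) :
    (∀ j : ℕ, X (n + 1 + j)) → ℂ :=
  fun y => ∫ w, ζ (spliceMid hnm y w) ∂(νtail (m + 1))


section AuxUnique
open Set

variable {ι : Type*} {Y : ι → Type*} [∀ i, MeasurableSpace (Y i)]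
  {m : ∀ i, Measure (Y i)} {ν : Measure (∀ i, Y i)}

lemma IsProductMeasure.map_restrict [∀ i, IsProbabilityMeasure (m i)]
    (hν : IsProductMeasure m ν) (F : Finset ι) :
    Measure.map F.restrict ν = Measure.pi (fun i : F => m ((i : F) : ι)) := by
  classical
  refine (Measure.pi_eq fun s hs => ?_).symm
  have hrm : Measurable (F.restrict : (∀ i, Y i) → ∀ i : F, Y i) :=
    measurable_pi_lambda _ (fun i => measurable_pi_apply _)
  rw [Measure.map_apply hrm (MeasurableSet.univ_pi hs)]
  set s' : ∀ i, Set (Y i) := fun i => if h : i ∈ F then s ⟨i, h⟩ else univ with hs'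
  have hpre : (F.restrict : (∀ i, Y i) → _) ⁻¹' (univ.pi s) = {x | ∀ i ∈ F, x i ∈ s' i} := by
    ext x
    simp only [mem_preimage, Set.mem_pi, mem_univ, forall_true_left, Subtype.forall,
      Finset.restrict, mem_setOf_eq, hs']
    constructor
    · intro h i hi; rw [dif_pos hi]; exact h i hi
    · intro h i hi; have := h i hi; rwa [dif_pos hi] at this
  have hmeas' : ∀ i, MeasurableSet (s' i) := by
    intro i
    rw [hs']
    show MeasurableSet (if h : i ∈ F then (s ⟨i, h⟩ : Set (Y i)) else (univ : Set (Y i)))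
    by_cases h : i ∈ F
    · rw [dif_pos h]; exact hs ⟨i, h⟩
    · rw [dif_neg h]; exact MeasurableSet.univ
  rw [hpre, hν F s' hmeas']
  rw [← Finset.prod_coe_sort F (fun i => m i (s' i))]
  refine Finset.prod_congr rfl fun i _ => ?_
  simp only [hs', dif_pos i.2]

lemma IsProductMeasure.unique [∀ i, IsProbabilityMeasure (m i)]
    {ν₁ ν₂ : Measure (∀ i, Y i)} [IsProbabilityMeasure ν₁] [IsProbabilityMeasure ν₂]
    (h₁ : IsProductMeasure m ν₁) (h₂ : IsProductMeasure m ν₂) : ν₁ = ν₂ := by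
  refine ext_of_generate_finite _ generateFrom_measurableCylinders.symm
    isPiSystem_measurableCylinders ?_ (by simp)
  intro t ht
  obtain ⟨F, S, hS, rfl⟩ := (mem_measurableCylinders t).1 ht
  have hrm : Measurable (F.restrict : (∀ i, Y i) → ∀ i : F, Y i) :=
    measurable_pi_lambda _ (fun i => measurable_pi_apply _)
  have e1 := h₁.map_restrict F
  have e2 := h₂.map_restrict F
  calc ν₁ (cylinder F S) = Measure.map F.restrict ν₁ S := (Measure.map_apply hrm hS).symm
    _ = Measure.map F.restrict ν₂ S := by rw [e1, e2]
    _ = ν₂ (cylinder F S) := Measure.map_apply hrm hS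

end AuxUnique

section AuxSplice
open Set

lemma splice_lt {n : ℕ} (x : ∀ j : Fin (n + 1), X j) (y : ∀ j : ℕ, X (n + 1 + j))
    {j : ℕ} (h : j < n + 1) : splice n x y j = x ⟨j, h⟩ := dif_pos h

lemma splice_add {n : ℕ} (x : ∀ j : Fin (n + 1), X j) (y : ∀ j : ℕ, X (n + 1 + j))
    (j : ℕ) : splice n x y (n + 1 + j) = y j := by
  have h : ¬ n + 1 + j < n + 1 := by omega
  rw [splice, dif_neg h]
  have hk : n + 1 + j - (n + 1) = j := by omega
  exact eq_of_heq ((cast_heq _ _).trans (by rw [hk]))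

lemma cast_w_eq {m c : ℕ} (w : ∀ j : ℕ, X (m + 1 + j)) {a b : ℕ} (hab : a = b)
    (e1 : m + 1 + a = c) (e2 : m + 1 + b = c) :
    cast (congrArg X e1) (w a) = cast (congrArg X e2) (w b) := by
  subst hab; rfl

lemma measurable_cast_of_eq [∀ j, MeasurableSpace (X j)] {j k : ℕ} (e : k = j) :
    Measurable (cast (congrArg X e) : X k → X j) := by
  subst e; exact measurable_id

lemma measurable_splice [∀ j, MeasurableSpace (X j)] (n : ℕ) :
    Measurable (fun q : (∀ j : Fin (n + 1), X j) × (∀ j : ℕ, X (n + 1 + j)) =>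
      splice n q.1 q.2) := by
  apply measurable_pi_lambda
  intro j
  by_cases h : j < n + 1
  · simp only [splice, dif_pos h]
    exact (measurable_pi_apply _).comp measurable_fst
  · simp only [splice, dif_neg h]
    exact (measurable_cast_of_eq (show n + 1 + (j - (n + 1)) = j by omega)).comp
      ((measurable_pi_apply _).comp measurable_snd)

lemma splice_spliceMid {n m : ℕ} (hnm : n ≤ m) (x : ∀ j : ℕ, X j)
    (w : ∀ j : ℕ, X (m + 1 + j)) (j : ℕ) :
    splice m (fun i : Fin (m + 1) => x i) w (n + 1 + j)
      = spliceMid hnm (fun i => x (n + 1 + i)) w j := by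
  by_cases h : j < m - n
  · rw [splice_lt _ _ (show n + 1 + j < m + 1 by omega)]
    simp only [spliceMid, dif_pos h]
  · simp only [splice, spliceMid, dif_neg h, dif_neg (show ¬ n + 1 + j < m + 1 by omega)]
    exact cast_w_eq w (by omega : n + 1 + j - (m + 1) = j - (m - n)) (by omega) (by omega)

lemma isProductMeasure_map_splice [∀ j, MeasurableSpace (X j)]
    (μ : ∀ j, Measure (X j)) [∀ j, IsProbabilityMeasure (μ j)] (n : ℕ)
    (νt : Measure (∀ j : ℕ, X (n + 1 + j))) [IsProbabilityMeasure νt]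
    (hνt : IsProductMeasure (fun j => μ (n + 1 + j)) νt) :
    IsProductMeasure μ (Measure.map
      (fun q : (∀ j : Fin (n + 1), X j) × (∀ j : ℕ, X (n + 1 + j)) => splice n q.1 q.2)
      ((muLe μ n).prod νt)) := by
  classical
  intro F s hs
  have hcyl : MeasurableSet {x : ∀ j, X j | ∀ i ∈ F, x i ∈ s i} := by
    have : {x : ∀ j, X j | ∀ i ∈ F, x i ∈ s i} = ⋂ i ∈ F, (fun x => x i) ⁻¹' (s i) := by
      ext x; simp
    rw [this]
    exact MeasurableSet.biInter F.countable_toSet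
      (fun i _ => (measurable_pi_apply i) (hs i))
  rw [Measure.map_apply (measurable_splice n) hcyl]
  set G : Finset ℕ := (F.filter (fun i => ¬ i < n + 1)).image (fun i => i - (n + 1)) with hG
  set A : Set (∀ j : Fin (n + 1), X j) :=
    univ.pi (fun i : Fin (n + 1) => if (i : ℕ) ∈ F then s i else univ) with hA
  set B : Set (∀ j : ℕ, X (n + 1 + j)) := {b | ∀ j ∈ G, b j ∈ s (n + 1 + j)} with hB
  have hpre : (fun q : (∀ j : Fin (n + 1), X j) × (∀ j : ℕ, X (n + 1 + j)) =>
      splice n q.1 q.2) ⁻¹' {x | ∀ i ∈ F, x i ∈ s i} = A ×ˢ B := by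
    ext ⟨a, b⟩
    simp only [mem_preimage, mem_setOf_eq, mem_prod, hA, hB, Set.mem_pi, mem_univ,
      forall_true_left]
    constructor
    · intro h
      constructor
      · intro i
        by_cases hi : (i : ℕ) ∈ F
        · rw [if_pos hi]
          have := h i hi
          rw [splice_lt a b i.2] at this
          simpa using this
        · rw [if_neg hi]; trivial
      · intro j hj
        simp only [hG, Finset.mem_image, Finset.mem_filter] at hj
        obtain ⟨i, ⟨hiF, hin⟩, rfl⟩ := hj
        have hi : n + 1 + (i - (n + 1)) = i := by omega
        have := h i hiF
        rw [← hi] at this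
        rwa [splice_add a b] at this
    · rintro ⟨h1, h2⟩ i hiF
      by_cases hi : i < n + 1
      · rw [splice_lt a b hi]
        have := h1 ⟨i, hi⟩
        rwa [if_pos hiF] at this
      · have hj : i - (n + 1) ∈ G := by
          simp only [hG, Finset.mem_image, Finset.mem_filter]
          exact ⟨i, ⟨hiF, hi⟩, rfl⟩
        have := h2 _ hj
        have hi' : n + 1 + (i - (n + 1)) = i := by omega
        rw [← hi', splice_add a b]
        exact this
  rw [hpre]
  have hAm : MeasurableSet A := by
    refine MeasurableSet.univ_pi fun i => ?_
    by_cases hi : (i : ℕ) ∈ F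
    · rw [if_pos hi]; exact hs i
    · rw [if_neg hi]; exact MeasurableSet.univ
  have hBm : MeasurableSet B := by
    have : B = ⋂ j ∈ G, (fun b : ∀ j : ℕ, X (n + 1 + j) => b j) ⁻¹' (s (n + 1 + j)) := by
      ext b; simp [hB]
    rw [this]
    exact MeasurableSet.biInter G.countable_toSet
      (fun j _ => (measurable_pi_apply j) (hs (n + 1 + j)))
  rw [Measure.prod_prod]
  have hAval : muLe μ n A = ∏ i ∈ F.filter (fun i => i < n + 1), μ i (s i) := by
    rw [hA, muLe, Measure.pi_pi]
    have : ∀ i : Fin (n + 1),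
        μ i (if (i : ℕ) ∈ F then s i else univ) = if (i : ℕ) ∈ F then μ i (s i) else 1 := by
      intro i
      by_cases hi : (i : ℕ) ∈ F <;> simp [hi]
    rw [Finset.prod_congr rfl (fun i _ => this i)]
    rw [← Finset.prod_filter]
    rw [← Finset.prod_image (f := fun i => μ i (s i))
      (g := fun i : Fin (n + 1) => (i : ℕ))
      (by intro a _ b _ hab; exact Fin.val_injective hab)]
    congr 1
    ext i
    simp only [Finset.mem_image, Finset.mem_filter, Finset.mem_univ, true_and]
    constructor
    · rintro ⟨a, ha, rfl⟩; exact ⟨ha, a.2⟩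
    · rintro ⟨hiF, hi⟩; exact ⟨⟨i, hi⟩, hiF, rfl⟩
  have hBval : νt B = ∏ i ∈ F.filter (fun i => ¬ i < n + 1), μ i (s i) := by
    rw [hB, hνt G (fun j => s (n + 1 + j)) (fun j => hs (n + 1 + j))]
    rw [hG, Finset.prod_image ?hinj]
    case hinj =>
      intro a ha b hb hab
      simp only [Finset.coe_filter, Finset.mem_coe, Finset.mem_filter, Set.mem_setOf_eq] at ha hb hab
      omega
    refine Finset.prod_congr rfl fun i hi => ?_
    simp only [Finset.mem_filter] at hi
    obtain ⟨j, rfl⟩ : ∃ j, n + 1 + j = i := ⟨i - (n + 1), by omega⟩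
    rw [Nat.add_sub_cancel_left]
  rw [hAval, hBval, Finset.prod_filter_mul_prod_filter_not]

end AuxSplice

theorem stmt9 (p : ℝ≥0∞) (hp : 1 ≤ p) (hp' : p ≠ ∞)
    {X : ℕ → Type*} [∀ j, MeasurableSpace (X j)]
    (μ : ∀ j, Measure (X j)) [∀ j, IsProbabilityMeasure (μ j)]
    (νall : Measure (∀ j, X j)) [IsProbabilityMeasure νall]
    (hνall : IsProductMeasure μ νall)
    (νtail : ∀ k, Measure (∀ j : ℕ, X (k + j))) [∀ k, IsProbabilityMeasure (νtail k)]
    (hνtail : ∀ k, IsProductMeasure (fun j => μ (k + j)) (νtail k))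
    {n m : ℕ} (hnm : n ≤ m)
    (ξ : (∀ j : Fin (n + 1), X j) → ℂ) (hξ : MemLp ξ p (muLe μ n))
    (η : (∀ j : ℕ, X (n + 1 + j)) → ℂ) (hη : MemLp η p (νtail (n + 1))) :
    MemLp (tensFun n ξ η) p νall ∧
      eLpNorm (tensFun n ξ η) p νall
        = eLpNorm ξ p (muLe μ n) * eLpNorm η p (νtail (n + 1)) ∧
      PnFun νtail m (tensFun n ξ η) = tensFun n ξ (PtailFun νtail hnm η) := by
  classical
  have hp0 : p ≠ 0 := (zero_lt_one.trans_le hp).ne'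
  set c : (∀ j : Fin (n + 1), X j) × (∀ j : ℕ, X (n + 1 + j)) → (∀ j, X j) :=
    fun q => splice n q.1 q.2 with hc
  have hcm : Measurable c := measurable_splice n
  have hprod : IsProductMeasure μ (Measure.map c ((muLe μ n).prod (νtail (n + 1)))) :=
    isProductMeasure_map_splice μ n (νtail (n + 1)) (hνtail (n + 1))
  haveI : IsProbabilityMeasure (muLe μ n) := by unfold muLe; infer_instance
  have hprob : IsProbabilityMeasure (Measure.map c ((muLe μ n).prod (νtail (n + 1)))) :=
    Measure.isProbabilityMeasure_map hcm.aemeasurable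
  have hνeq : νall = Measure.map c ((muLe μ n).prod (νtail (n + 1))) :=
    hνall.unique hprod
  set Φ : (∀ j, X j) → (∀ j : Fin (n + 1), X j) × (∀ j : ℕ, X (n + 1 + j)) :=
    fun x => (fun j => x j, fun j => x (n + 1 + j)) with hΦdef
  have hΦm : Measurable Φ :=
    Measurable.prod (measurable_pi_lambda _ fun j => measurable_pi_apply _)
      (measurable_pi_lambda _ fun j => measurable_pi_apply _)
  have hΦc : Φ ∘ c = id := by
    funext q
    refine Prod.ext ?_ ?_
    · funext j
      show splice n q.1 q.2 (j : ℕ) = q.1 j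
      rw [splice_lt q.1 q.2 j.2]
    · funext j
      exact splice_add q.1 q.2 j
  have hmap : Measure.map Φ νall = (muLe μ n).prod (νtail (n + 1)) := by
    rw [hνeq, Measure.map_map hΦm hcm, hΦc, Measure.map_id]
  have hMP : MeasurePreserving Φ νall ((muLe μ n).prod (νtail (n + 1))) := ⟨hΦm, hmap⟩
  set g : (∀ j : Fin (n + 1), X j) × (∀ j : ℕ, X (n + 1 + j)) → ℂ :=
    fun q => ξ q.1 * η q.2 with hg
  have hgm : AEStronglyMeasurable g ((muLe μ n).prod (νtail (n + 1))) :=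
    (hξ.1.comp_quasiMeasurePreserving Measure.quasiMeasurePreserving_fst).mul
      (hη.1.comp_quasiMeasurePreserving Measure.quasiMeasurePreserving_snd)
  have hgnorm : eLpNorm g p ((muLe μ n).prod (νtail (n + 1)))
      = eLpNorm ξ p (muLe μ n) * eLpNorm η p (νtail (n + 1)) := by
    rw [eLpNorm_eq_lintegral_rpow_enorm_toReal hp0 hp', eLpNorm_eq_lintegral_rpow_enorm_toReal hp0 hp',
      eLpNorm_eq_lintegral_rpow_enorm_toReal hp0 hp']
    simp only [enorm_eq_nnnorm]
    have h1 : ∀ q : (∀ j : Fin (n + 1), X j) × (∀ j : ℕ, X (n + 1 + j)),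
        ((‖g q‖₊ : ℝ≥0∞)) ^ p.toReal
          = (‖ξ q.1‖₊ : ℝ≥0∞) ^ p.toReal * (‖η q.2‖₊ : ℝ≥0∞) ^ p.toReal := by
      intro q
      rw [show g q = ξ q.1 * η q.2 from rfl, nnnorm_mul, ENNReal.coe_mul,
        ENNReal.mul_rpow_of_nonneg _ _ ENNReal.toReal_nonneg]
    rw [lintegral_congr h1,
      lintegral_prod_mul (f := fun a => (‖ξ a‖₊ : ℝ≥0∞) ^ p.toReal)
        (g := fun a => (‖η a‖₊ : ℝ≥0∞) ^ p.toReal) (hξ.1.enorm.pow_const _) (hη.1.enorm.pow_const _),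
      ENNReal.mul_rpow_of_nonneg _ _ (by positivity)]
  have hgmem : MemLp g p ((muLe μ n).prod (νtail (n + 1))) :=
    ⟨hgm, by rw [hgnorm]; exact ENNReal.mul_lt_top hξ.2 hη.2⟩
  have htens : tensFun n ξ η = g ∘ Φ := rfl
  refine ⟨?_, ?_, ?_⟩
  · rw [htens]
    exact hgmem.comp_measurePreserving hMP
  · rw [htens, eLpNorm_comp_measurePreserving hgm hMP, hgnorm]
  · funext x
    show (∫ w, tensFun n ξ η (splice m (fun j : Fin (m + 1) => x j) w) ∂(νtail (m + 1)))
      = ξ (fun j : Fin (n + 1) => x j) * PtailFun νtail hnm η (fun j => x (n + 1 + j))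
    have key : ∀ w, tensFun n ξ η (splice m (fun j : Fin (m + 1) => x j) w)
        = ξ (fun j : Fin (n + 1) => x j)
          * η (spliceMid hnm (fun j => x (n + 1 + j)) w) := by
      intro w
      have h1 : (fun j : Fin (n + 1) => splice m (fun i : Fin (m + 1) => x i) w (j : ℕ))
          = fun j : Fin (n + 1) => x (j : ℕ) :=
        funext fun j => splice_lt _ _ (show (j : ℕ) < m + 1 by omega)
      have h2 : (fun j => splice m (fun i : Fin (m + 1) => x i) w (n + 1 + j))
          = spliceMid hnm (fun j => x (n + 1 + j)) w :=
        funext (splice_spliceMid hnm x w)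
      simp only [tensFun]
      rw [h1, h2]
    rw [integral_congr_ae (Filter.Eventually.of_forall key)]
    rw [MeasureTheory.integral_const_mul]
    rfl
end
end
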